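/- For n ≥ 1, let Dₙ be the union of all full fundamental intervals Δ(w) of rank n such that Δ(w′) is non-full for every nonempty proper prefix w′ of w. Then the sets Dₙ, n ≥ 1, are pairwise disjoint and λ(⋃_{n≥1} Dₙ) = Σ_{n≥1} λ(Dₙ) = λ([0, a₁)) = a₁; in particular, Lebesgue-almost every point of [0, a₁) lies in some full fundamental interval. -/

import Mathlib

open MeasureTheory Set

/-- The greedy β-transformation with deleted digit set `{0, a₁, a₂}`:
`T x = βx` on `Δ(0) = [0, a₁/β)`, `T x = βx − a₁` on `Δ(a₁) = [a₁/β, a₂/β)`,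
and `T x = βx − a₂` on `Δ(a₂) = [a₂/β, a₁)`. -/
noncomputable def greedyT (β a₁ a₂ : ℝ) (x : ℝ) : ℝ :=
  if x < a₁ / β then β * x
  else if x < a₂ / β then β * x - a₁
  else β * x - a₂

/-- The interval `Δ(b)` associated to a digit `b ∈ {0, a₁, a₂}`. -/
noncomputable def digitInt (β a₁ a₂ : ℝ) (b : ℝ) : Set ℝ :=
  if b = 0 then Set.Ico 0 (a₁ / β)
  else if b = a₁ then Set.Ico (a₁ / β) (a₂ / β)
  else Set.Ico (a₂ / β) a₁

/-- The fundamental interval `Δ(w) = ⋂_{k < n} T⁻ᵏ Δ(b_k)` of a word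
`w = (b₀, …, b_{n−1})`. -/
noncomputable def cyl (β a₁ a₂ : ℝ) (w : List ℝ) : Set ℝ :=
  ⋂ k ∈ Finset.range w.length,
    (greedyT β a₁ a₂)^[k] ⁻¹' digitInt β a₁ a₂ (w.getD k 0)

/-- `w` is a word over the alphabet `A = {0, a₁, a₂}`. -/
def isWord (a₁ a₂ : ℝ) (w : List ℝ) : Prop := ∀ b ∈ w, b = 0 ∨ b = a₁ ∨ b = a₂

/-- The fundamental interval `Δ(w)` is full: `λ(Δ(w)) = a₁/β^|w|`. -/
def isFull (β a₁ a₂ : ℝ) (w : List ℝ) : Prop :=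
  volume (cyl β a₁ a₂ w) = ENNReal.ofReal (a₁ / β ^ w.length)

/-- Condition (6): `a₁ · max (β−1) 1 < a₂ < a₁ · min 2 β`. -/
def condition6 (β a₁ a₂ : ℝ) : Prop :=
  a₁ * max (β - 1) 1 < a₂ ∧ a₂ < a₁ * min 2 β

/-- `w ∈ Bₙ`: `w` is a word of length `n` over `A` with `λ(Δ(w)) > 0`, `Δ(w)`
non-full, and `Δ(w′)` non-full for every nonempty proper prefix `w′` of `w`. -/
def memB (β a₁ a₂ : ℝ) (n : ℕ) (w : List ℝ) : Prop :=
  w.length = n ∧ isWord a₁ a₂ w ∧ 0 < volume (cyl β a₁ a₂ w) ∧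
    ¬ isFull β a₁ a₂ w ∧
    ∀ w' : List ℝ, w' ≠ [] → w' <+: w → w' ≠ w → ¬ isFull β a₁ a₂ w'

/-- `κ(n)`: the number of elements of `Bₙ`. -/
noncomputable def kappa (β a₁ a₂ : ℝ) (n : ℕ) : ℕ :=
  {w : List ℝ | memB β a₁ a₂ n w}.ncard

/-- `Dₙ`: the union of all full fundamental intervals `Δ(w)` of rank `n` such
that `Δ(w′)` is non-full for every nonempty proper prefix `w′` of `w`. -/
noncomputable def Dset (β a₁ a₂ : ℝ) (n : ℕ) : Set ℝ :=
  ⋃ w ∈ {w : List ℝ | w.length = n ∧ isWord a₁ a₂ w ∧ isFull β a₁ a₂ w ∧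
      ∀ w' : List ℝ, w' ≠ [] → w' <+: w → w' ≠ w → ¬ isFull β a₁ a₂ w'},
    cyl β a₁ a₂ w

open scoped ENNReal Classical

structure Hyp (β a₁ a₂ : ℝ) : Prop where
  hβ1 : 1 < β
  ha₁ : 0 < a₁
  h12 : a₁ < a₂
  h2a : a₂ < 2 * a₁
  hab : a₂ < a₁ * β
  hba : a₁ * β - a₁ < a₂

namespace Hyp

variable {β a₁ a₂ : ℝ}

lemma hβ0 (h : Hyp β a₁ a₂) : 0 < β := lt_trans one_pos h.hβ1
lemma ha₂ (h : Hyp β a₁ a₂) : 0 < a₂ := lt_trans h.ha₁ h.h12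
lemma d10 (h : Hyp β a₁ a₂) : 0 < a₁ / β := div_pos h.ha₁ h.hβ0
lemma d12 (h : Hyp β a₁ a₂) : a₁ / β < a₂ / β :=
  div_lt_div_of_pos_right h.h12 h.hβ0
lemma d2a (h : Hyp β a₁ a₂) : a₂ / β < a₁ :=
  (div_lt_iff₀ h.hβ0).2 (by linarith [h.hab])
lemma a1ne (h : Hyp β a₁ a₂) : a₁ ≠ 0 := ne_of_gt h.ha₁
lemma a2ne (h : Hyp β a₁ a₂) : a₂ ≠ 0 := ne_of_gt h.ha₂
lemma a21ne (h : Hyp β a₁ a₂) : a₂ ≠ a₁ := ne_of_gt h.h12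

end Hyp

/-- left endpoint of the digit interval -/
noncomputable def uD (β a₁ a₂ b : ℝ) : ℝ :=
  if b = 0 then 0 else if b = a₁ then a₁ / β else a₂ / β

/-- right endpoint of the digit interval -/
noncomputable def vD (β a₁ a₂ b : ℝ) : ℝ :=
  if b = 0 then a₁ / β else if b = a₁ then a₂ / β else a₁

lemma digitInt_eq (β a₁ a₂ b : ℝ) :
    digitInt β a₁ a₂ b = Set.Ico (uD β a₁ a₂ b) (vD β a₁ a₂ b) := by
  unfold digitInt uD vD; split_ifs <;> rfl


section Eval
variable {β a₁ a₂ : ℝ}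

lemma digitInt_zero : digitInt β a₁ a₂ 0 = Set.Ico 0 (a₁ / β) := if_pos rfl
lemma digitInt_a1 (h : Hyp β a₁ a₂) : digitInt β a₁ a₂ a₁ = Set.Ico (a₁ / β) (a₂ / β) := by
  unfold digitInt; rw [if_neg h.a1ne, if_pos rfl]
lemma digitInt_a2 (h : Hyp β a₁ a₂) : digitInt β a₁ a₂ a₂ = Set.Ico (a₂ / β) a₁ := by
  unfold digitInt; rw [if_neg h.a2ne, if_neg h.a21ne]
lemma uD_zero : uD β a₁ a₂ 0 = 0 := if_pos rfl
lemma uD_a1 (h : Hyp β a₁ a₂) : uD β a₁ a₂ a₁ = a₁ / β := by unfold uD; rw [if_neg h.a1ne, if_pos rfl]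
lemma uD_a2 (h : Hyp β a₁ a₂) : uD β a₁ a₂ a₂ = a₂ / β := by unfold uD; rw [if_neg h.a2ne, if_neg h.a21ne]
lemma vD_zero : vD β a₁ a₂ 0 = a₁ / β := if_pos rfl
lemma vD_a1 (h : Hyp β a₁ a₂) : vD β a₁ a₂ a₁ = a₂ / β := by unfold vD; rw [if_neg h.a1ne, if_pos rfl]
lemma vD_a2 (h : Hyp β a₁ a₂) : vD β a₁ a₂ a₂ = a₁ := by unfold vD; rw [if_neg h.a2ne, if_neg h.a21ne]

lemma beta_uD (h : Hyp β a₁ a₂) {b : ℝ} (hb : b = 0 ∨ b = a₁ ∨ b = a₂) : β * uD β a₁ a₂ b = b := by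
  have hβ := ne_of_gt h.hβ0
  rcases hb with rfl | rfl | rfl
  · rw [uD_zero]; ring
  · rw [uD_a1 h, mul_div_cancel₀ _ hβ]
  · rw [uD_a2 h, mul_div_cancel₀ _ hβ]


lemma mem_digitInt_cases (h : Hyp β a₁ a₂) {b x : ℝ}
    (hb : b = 0 ∨ b = a₁ ∨ b = a₂) (hx : x ∈ digitInt β a₁ a₂ b) :
    (b = 0 ∧ 0 ≤ x ∧ x < a₁ / β) ∨ (b = a₁ ∧ a₁ / β ≤ x ∧ x < a₂ / β) ∨
      (b = a₂ ∧ a₂ / β ≤ x ∧ x < a₁) := by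
  rcases hb with rfl | rfl | rfl
  · rw [digitInt_zero, Set.mem_Ico] at hx; exact Or.inl ⟨rfl, hx⟩
  · rw [digitInt_a1 h, Set.mem_Ico] at hx; exact Or.inr (Or.inl ⟨rfl, hx⟩)
  · rw [digitInt_a2 h, Set.mem_Ico] at hx; exact Or.inr (Or.inr ⟨rfl, hx⟩)

/-- distinct digits have disjoint digit intervals -/
lemma digit_unique (h : Hyp β a₁ a₂) {b b' x : ℝ}
    (hb : b = 0 ∨ b = a₁ ∨ b = a₂) (hb' : b' = 0 ∨ b' = a₁ ∨ b' = a₂)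
    (hx : x ∈ digitInt β a₁ a₂ b) (hx' : x ∈ digitInt β a₁ a₂ b') : b = b' := by
  have d12 := h.d12; have d10 := h.d10; have d2a := h.d2a
  rcases mem_digitInt_cases h hb hx with ⟨e, l, r⟩ | ⟨e, l, r⟩ | ⟨e, l, r⟩ <;>
    rcases mem_digitInt_cases h hb' hx' with ⟨e', l', r'⟩ | ⟨e', l', r'⟩ | ⟨e', l', r'⟩ <;>
    rw [e, e'] <;> linarith

/-- membership in `Ico 0 a₁` from digit intervals -/
lemma digitInt_subset (h : Hyp β a₁ a₂) {b : ℝ} (hb : b = 0 ∨ b = a₁ ∨ b = a₂) :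
    digitInt β a₁ a₂ b ⊆ Set.Ico 0 a₁ := by
  have d12 := h.d12; have d10 := h.d10; have d2a := h.d2a
  intro x hx
  rcases mem_digitInt_cases h hb hx with ⟨_, l, r⟩ | ⟨_, l, r⟩ | ⟨_, l, r⟩ <;>
    exact Set.mem_Ico.2 ⟨by linarith, by linarith⟩

/-- the greedy map preserves `[0, a₁)` -/
lemma greedyT_mem (h : Hyp β a₁ a₂) {x : ℝ} (hx : x ∈ Set.Ico 0 a₁) :
    greedyT β a₁ a₂ x ∈ Set.Ico 0 a₁ := by
  have hβ0 := h.hβ0; have ha₁ := h.ha₁; have h12 := h.h12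
  have h2a := h.h2a; have hab := h.hab; have hba := h.hba
  obtain ⟨hx0, hx1⟩ := Set.mem_Ico.1 hx
  unfold greedyT
  split_ifs with h1 h2
  · have := (lt_div_iff₀ hβ0).1 h1
    exact Set.mem_Ico.2 ⟨by positivity, by linarith⟩
  · have := (div_le_iff₀ hβ0).1 (not_lt.1 h1)
    have := (lt_div_iff₀ hβ0).1 h2
    exact Set.mem_Ico.2 ⟨by linarith, by linarith⟩
  · have := (div_le_iff₀ hβ0).1 (not_lt.1 h2)
    have : β * x < β * a₁ := by nlinarith
    exact Set.mem_Ico.2 ⟨by linarith, by linarith⟩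

lemma greedyT_iter_mem (h : Hyp β a₁ a₂) {x : ℝ} (hx : x ∈ Set.Ico 0 a₁) (k : ℕ) :
    (greedyT β a₁ a₂)^[k] x ∈ Set.Ico 0 a₁ := by
  induction k with
  | zero => exact hx
  | succ n ih => rw [Function.iterate_succ_apply']; exact greedyT_mem h ih

/-- on the digit interval of `b`, `T y = β y − b` -/
lemma greedyT_eq_on (h : Hyp β a₁ a₂) {b y : ℝ} (hb : b = 0 ∨ b = a₁ ∨ b = a₂)
    (hy : y ∈ digitInt β a₁ a₂ b) : greedyT β a₁ a₂ y = β * y - b := by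
  have d12 := h.d12
  unfold greedyT
  rcases mem_digitInt_cases h hb hy with ⟨e, l, r⟩ | ⟨e, l, r⟩ | ⟨e, l, r⟩
  · rw [if_pos r, e, sub_zero]
  · rw [if_neg (not_lt.2 l), if_pos r, e]
  · rw [if_neg (not_lt.2 (by linarith)), if_neg (not_lt.2 l), e]
end Eval

section Cyl
variable {β a₁ a₂ : ℝ}

lemma mem_cyl_iff {w : List ℝ} {x : ℝ} :
    x ∈ cyl β a₁ a₂ w ↔
      ∀ k < w.length, (greedyT β a₁ a₂)^[k] x ∈ digitInt β a₁ a₂ (w.getD k 0) := by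
  simp [cyl, Set.mem_iInter, Finset.mem_range]

lemma cyl_snoc (w : List ℝ) (b : ℝ) :
    cyl β a₁ a₂ (w ++ [b]) =
      cyl β a₁ a₂ w ∩ (greedyT β a₁ a₂)^[w.length] ⁻¹' digitInt β a₁ a₂ b := by
  ext x
  simp only [mem_cyl_iff, Set.mem_inter_iff, Set.mem_preimage, List.length_append,
    List.length_singleton]
  constructor
  · intro hx
    refine ⟨fun k hk => ?_, ?_⟩
    · have := hx k (by omega)
      rwa [List.getD_append _ _ _ _ hk] at this
    · have := hx w.length (by omega)
      rwa [List.getD_append_right _ _ _ _ (le_refl _), Nat.sub_self] at this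
  · rintro ⟨h1, h2⟩ k hk
    rcases lt_or_eq_of_le (Nat.lt_succ_iff.1 (by omega : k < w.length + 1)) with hlt | rfl
    · rw [List.getD_append _ _ _ _ hlt]; exact h1 k hlt
    · rwa [List.getD_append_right _ _ _ _ (le_refl _), Nat.sub_self]

lemma cyl_prefix {w v : List ℝ} (hpre : w <+: v) : cyl β a₁ a₂ v ⊆ cyl β a₁ a₂ w := by
  obtain ⟨t, rfl⟩ := hpre
  intro x hx
  rw [mem_cyl_iff] at hx ⊢
  intro k hk
  have := hx k (by rw [List.length_append]; omega)
  rwa [List.getD_append _ _ _ _ hk] at this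

lemma cyl_subset_Ico (h : Hyp β a₁ a₂) {w : List ℝ} (hne : w ≠ [])
    (hw : isWord a₁ a₂ w) : cyl β a₁ a₂ w ⊆ Set.Ico 0 a₁ := by
  intro x hx
  have hlen : 0 < w.length := List.length_pos_iff.2 hne
  have := mem_cyl_iff.1 hx 0 hlen
  simp only [Function.iterate_zero, id_eq] at this
  have hmem : w.getD 0 0 ∈ w := by
    rw [List.getD_eq_getElem _ _ hlen]; exact List.getElem_mem hlen
  exact digitInt_subset h (hw _ hmem) this

end Cyl

section Word
variable {β a₁ a₂ : ℝ}

noncomputable def digitOf (β a₁ a₂ x : ℝ) : ℝ :=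
  if x < a₁ / β then 0 else if x < a₂ / β then a₁ else a₂

lemma digitOf_alphabet (β a₁ a₂ x : ℝ) :
    digitOf β a₁ a₂ x = 0 ∨ digitOf β a₁ a₂ x = a₁ ∨ digitOf β a₁ a₂ x = a₂ := by
  unfold digitOf; split_ifs <;> simp

lemma mem_digitInt_digitOf (h : Hyp β a₁ a₂) {x : ℝ} (hx : x ∈ Set.Ico 0 a₁) :
    x ∈ digitInt β a₁ a₂ (digitOf β a₁ a₂ x) := by
  obtain ⟨hx0, hx1⟩ := Set.mem_Ico.1 hx
  unfold digitOf
  split_ifs with h1 h2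
  · rw [digitInt_zero]; exact Set.mem_Ico.2 ⟨hx0, h1⟩
  · rw [digitInt_a1 h]; exact Set.mem_Ico.2 ⟨not_lt.1 h1, h2⟩
  · rw [digitInt_a2 h]; exact Set.mem_Ico.2 ⟨not_lt.1 h2, hx1⟩

noncomputable def wordOf (β a₁ a₂ x : ℝ) (n : ℕ) : List ℝ :=
  List.ofFn (fun k : Fin n => digitOf β a₁ a₂ ((greedyT β a₁ a₂)^[(k : ℕ)] x))

@[simp] lemma wordOf_length (x : ℝ) (n : ℕ) : (wordOf β a₁ a₂ x n).length = n :=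
  List.length_ofFn

lemma wordOf_getD {x : ℝ} {n k : ℕ} (hk : k < n) :
    (wordOf β a₁ a₂ x n).getD k 0 = digitOf β a₁ a₂ ((greedyT β a₁ a₂)^[k] x) := by
  rw [List.getD_eq_getElem _ _ (by simp [hk])]
  simp only [wordOf]
  rw [List.getElem_ofFn]

lemma wordOf_isWord (x : ℝ) (n : ℕ) : isWord a₁ a₂ (wordOf β a₁ a₂ x n) := by
  intro b hb
  rw [wordOf, List.mem_ofFn] at hb
  obtain ⟨k, rfl⟩ := hb
  exact digitOf_alphabet _ _ _ _

lemma wordOf_ne_nil (x : ℝ) {n : ℕ} (hn : 0 < n) : wordOf β a₁ a₂ x n ≠ [] := by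
  intro hcon
  have := wordOf_length (β := β) (a₁ := a₁) (a₂ := a₂) x n
  rw [hcon] at this; simp at this; omega

lemma mem_cyl_wordOf (h : Hyp β a₁ a₂) {x : ℝ} (hx : x ∈ Set.Ico 0 a₁) (n : ℕ) :
    x ∈ cyl β a₁ a₂ (wordOf β a₁ a₂ x n) := by
  rw [mem_cyl_iff]
  intro k hk
  rw [wordOf_length] at hk
  rw [wordOf_getD hk]
  exact mem_digitInt_digitOf h (greedyT_iter_mem h hx k)

lemma wordOf_take {x : ℝ} {m n : ℕ} (hmn : m ≤ n) :
    (wordOf β a₁ a₂ x n).take m = wordOf β a₁ a₂ x m := by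
  apply List.ext_getElem
  · simp [hmn]
  · intro k h₁ h₂
    simp only [List.length_take, wordOf_length] at h₁ h₂
    rw [List.getElem_take]
    simp only [wordOf]
    rw [List.getElem_ofFn, List.getElem_ofFn]

lemma wordOf_prefix {x : ℝ} {m n : ℕ} (hmn : m ≤ n) :
    wordOf β a₁ a₂ x m <+: wordOf β a₁ a₂ x n := by
  rw [← wordOf_take (β := β) (a₁ := a₁) (a₂ := a₂) (x := x) hmn]
  exact List.take_prefix _ _

/-- a point lies in at most one cylinder of each rank among alphabet words -/
lemma word_unique (h : Hyp β a₁ a₂) {w v : List ℝ} (hw : isWord a₁ a₂ w)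
    (hv : isWord a₁ a₂ v) (hl : w.length = v.length) {x : ℝ}
    (hxw : x ∈ cyl β a₁ a₂ w) (hxv : x ∈ cyl β a₁ a₂ v) : w = v := by
  apply List.ext_getElem hl
  intro k h₁ h₂
  have e₁ : w.getD k 0 = w[k] := List.getD_eq_getElem _ _ h₁
  have e₂ : v.getD k 0 = v[k] := List.getD_eq_getElem _ _ h₂
  have m₁ := mem_cyl_iff.1 hxw k h₁
  have m₂ := mem_cyl_iff.1 hxv k h₂
  rw [e₁] at m₁; rw [e₂] at m₂
  exact digit_unique h (hw _ (List.getElem_mem h₁)) (hv _ (List.getElem_mem h₂)) m₁ m₂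

end Word

section Good
variable {β a₁ a₂ : ℝ}

lemma uD_cases (β a₁ a₂ b : ℝ) :
    uD β a₁ a₂ b = 0 ∨ uD β a₁ a₂ b = a₁ / β ∨ uD β a₁ a₂ b = a₂ / β := by
  unfold uD; split_ifs <;> simp

lemma uD_nonneg (h : Hyp β a₁ a₂) (b : ℝ) : 0 ≤ uD β a₁ a₂ b := by
  rcases uD_cases β a₁ a₂ b with e | e | e <;> rw [e]
  · exact le_of_lt h.d10
  · exact le_of_lt (div_pos h.ha₂ h.hβ0)

lemma cyl_singleton (b : ℝ) : cyl β a₁ a₂ [b] = digitInt β a₁ a₂ b := by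
  ext x
  rw [mem_cyl_iff]
  constructor
  · intro hx; have := hx 0 (by simp); simpa using this
  · intro hx k hk
    simp only [List.length_singleton, Nat.lt_one_iff] at hk
    subst hk; simpa using hx

/-- key computation: the cylinder of `w ++ [b]` from the data of `w`. -/
lemma cyl_snoc_eq (h : Hyp β a₁ a₂) {w : List ℝ} {b l t : ℝ}
    (hb : b = 0 ∨ b = a₁ ∨ b = a₂)
    (hcyl : cyl β a₁ a₂ w = Set.Ico l (l + t / β ^ w.length))
    (hmap : ∀ x ∈ cyl β a₁ a₂ w,
      (greedyT β a₁ a₂)^[w.length] x = β ^ w.length * (x - l)) :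
    cyl β a₁ a₂ (w ++ [b]) =
      Set.Ico (l + uD β a₁ a₂ b / β ^ w.length)
        (l + min t (vD β a₁ a₂ b) / β ^ w.length) ∧
    ∀ x ∈ cyl β a₁ a₂ (w ++ [b]),
      (greedyT β a₁ a₂)^[w.length + 1] x =
        β ^ (w.length + 1) * (x - (l + uD β a₁ a₂ b / β ^ w.length)) := by
  have hB : (0 : ℝ) < β ^ w.length := pow_pos h.hβ0 w.length
  set u := uD β a₁ a₂ b with hu
  set v := vD β a₁ a₂ b with hv
  have hsnoc := cyl_snoc (β := β) (a₁ := a₁) (a₂ := a₂) w b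
  have hset : cyl β a₁ a₂ (w ++ [b]) =
      Set.Ico (l + u / β ^ w.length) (l + min t v / β ^ w.length) := by
    rw [hsnoc]
    ext x
    simp only [Set.mem_inter_iff, Set.mem_preimage, Set.mem_Ico]
    constructor
    · rintro ⟨hx, hy⟩
      have hmapx := hmap x hx
      rw [hcyl, Set.mem_Ico] at hx
      rw [hmapx, digitInt_eq, Set.mem_Ico, ← hu, ← hv] at hy
      have hc := mul_comm (β ^ w.length) (x - l)
      constructor
      · have h1 : u / β ^ w.length ≤ x - l :=
          (div_le_iff₀ hB).2 (by linarith [hy.1])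
        linarith
      · have h2 : x - l < v / β ^ w.length :=
          (lt_div_iff₀ hB).2 (by linarith [hy.2])
        have h3 : x - l < t / β ^ w.length := by linarith [hx.2]
        have : x - l < min t v / β ^ w.length := by
          rw [lt_div_iff₀ hB] at h2 h3
          rw [lt_div_iff₀ hB, lt_min_iff]
          exact ⟨h3, h2⟩
        linarith
    · rintro ⟨h1, h2⟩
      have hun : 0 ≤ u := uD_nonneg h b
      have hxw : x ∈ cyl β a₁ a₂ w := by
        rw [hcyl, Set.mem_Ico]
        constructor
        · have : 0 ≤ u / β ^ w.length := div_nonneg hun (le_of_lt hB)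
          linarith
        · have : min t v / β ^ w.length ≤ t / β ^ w.length := by
            gcongr
            exact min_le_left _ _
          linarith
      refine ⟨hxw, ?_⟩
      rw [hmap x hxw, digitInt_eq, Set.mem_Ico, ← hu, ← hv]
      constructor
      · have : u / β ^ w.length ≤ x - l := by linarith
        have := (div_le_iff₀ hB).1 this
        linarith [mul_comm (x - l) (β ^ w.length)]
      · have : x - l < min t v / β ^ w.length := by linarith
        have := (lt_div_iff₀ hB).1 this
        have hmv : min t v ≤ v := min_le_right _ _
        nlinarith [mul_comm (x - l) (β ^ w.length)]
  refine ⟨hset, ?_⟩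
  intro x hx
  have hxmem := hx
  rw [hsnoc] at hxmem
  obtain ⟨hxw, hy⟩ := hxmem
  rw [Function.iterate_succ_apply', greedyT_eq_on h hb hy, hmap x hxw,
    ← beta_uD h hb, ← hu]
  have : β ^ (w.length + 1) = β * β ^ w.length := by ring
  rw [this]
  field_simp
  ring

end Good

section GoodMain
variable {β a₁ a₂ : ℝ}

lemma tprime_le (h : Hyp β a₁ a₂) {b t : ℝ} (hb : b = 0 ∨ b = a₁ ∨ b = a₂)
    (ht : t ≤ a₁) : β * (min t (vD β a₁ a₂ b) - uD β a₁ a₂ b) ≤ a₁ := by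
  have hβ0 := h.hβ0
  have e1 : β * (a₁ / β) = a₁ := mul_div_cancel₀ _ (ne_of_gt hβ0)
  have e2 : β * (a₂ / β) = a₂ := mul_div_cancel₀ _ (ne_of_gt hβ0)
  have h2a := h.h2a; have hba := h.hba
  rcases hb with rfl | rfl | rfl
  · rw [uD_zero, vD_zero]
    have := min_le_right t (a₁ / β)
    nlinarith
  · rw [uD_a1 h, vD_a1 h]
    have := min_le_right t (a₂ / β)
    nlinarith
  · rw [uD_a2 h, vD_a2 h]
    have := min_le_left t a₁
    nlinarith

/-- Structure theorem: every nonempty cylinder of a nonempty alphabet word is a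
half-open interval of the form `[l, l + t/βⁿ)` with `0 < t ≤ a₁`, on which the
`n`-th iterate of `T` is the affine map `x ↦ βⁿ(x − l)`. -/
lemma good (h : Hyp β a₁ a₂) :
    ∀ w : List ℝ, isWord a₁ a₂ w → w ≠ [] →
      cyl β a₁ a₂ w = ∅ ∨ ∃ l t : ℝ, 0 < t ∧ t ≤ a₁ ∧
        cyl β a₁ a₂ w = Set.Ico l (l + t / β ^ w.length) ∧
        ∀ x ∈ cyl β a₁ a₂ w,
          (greedyT β a₁ a₂)^[w.length] x = β ^ w.length * (x - l) := by
  have hβ0 := h.hβ0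
  intro w
  induction w using List.reverseRecOn with
  | nil => intro _ hne; exact absurd rfl hne
  | append_singleton w b ih =>
    intro hw _
    have hb : b = 0 ∨ b = a₁ ∨ b = a₂ := hw b (by simp)
    rcases eq_or_ne w [] with rfl | hwne
    · -- base case: single letter
      right
      simp only [List.nil_append]
      refine ⟨uD β a₁ a₂ b, β * (vD β a₁ a₂ b - uD β a₁ a₂ b), ?_, ?_, ?_, ?_⟩
      · have d12 := h.d12; have d10 := h.d10; have d2a := h.d2a
        rcases hb with rfl | rfl | rfl
        · rw [uD_zero, vD_zero]; nlinarith
        · rw [uD_a1 h, vD_a1 h]; nlinarith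
        · rw [uD_a2 h, vD_a2 h]; nlinarith
      · have := tprime_le h hb (le_refl a₁)
        have hm : min a₁ (vD β a₁ a₂ b) = vD β a₁ a₂ b := by
          have d12 := h.d12; have d10 := h.d10; have d2a := h.d2a
          rcases hb with rfl | rfl | rfl
          · rw [vD_zero]; exact min_eq_right (by linarith)
          · rw [vD_a1 h]; exact min_eq_right (by linarith)
          · rw [vD_a2 h]; exact min_eq_right (le_refl _)
        rwa [hm] at this
      · rw [cyl_singleton, digitInt_eq]
        congr 1
        rw [List.length_singleton, pow_one]
        field_simp
        ring
      · intro x hx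
        rw [cyl_singleton] at hx
        rw [List.length_singleton, Function.iterate_one, pow_one,
          greedyT_eq_on h hb hx]
        linear_combination beta_uD h hb
    · -- inductive step
      rcases ih (fun c hc => hw c (by simp [hc])) hwne with hemp | ⟨l, t, ht0, hta, hcyl, hmap⟩
      · left
        rw [cyl_snoc, hemp, Set.empty_inter]
      · obtain ⟨hset, hmap'⟩ := cyl_snoc_eq h hb hcyl hmap
        have hB : (0 : ℝ) < β ^ w.length := pow_pos hβ0 w.length
        set u := uD β a₁ a₂ b
        set v := vD β a₁ a₂ b
        rcases le_or_gt (min t v) u with hle | hlt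
        · left
          rw [hset]
          apply Set.Ico_eq_empty
          intro hcon
          have h1 : u / β ^ w.length < min t v / β ^ w.length := by linarith
          rw [div_lt_div_iff_of_pos_right hB] at h1
          linarith
        · right
          refine ⟨l + u / β ^ w.length, β * (min t v - u), by nlinarith, tprime_le h hb hta, ?_, ?_⟩
          · rw [hset]
            congr 1
            have key : β * (min t v - u) / β ^ (w.length + 1) =
                (min t v - u) / β ^ w.length := by
              rw [pow_succ, mul_comm (β ^ w.length) β,
                mul_div_mul_left _ _ (ne_of_gt hβ0)]
            rw [List.length_append, List.length_singleton, key]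
            ring
          · intro x hx
            have := hmap' x hx
            rwa [List.length_append, List.length_singleton]

end GoodMain

section Meas
variable {β a₁ a₂ : ℝ}

lemma greedyT_measurable (β a₁ a₂ : ℝ) : Measurable (greedyT β a₁ a₂) := by
  unfold greedyT
  refine Measurable.ite ?_ ?_ ?_
  · exact measurableSet_lt measurable_id measurable_const
  · exact measurable_id.const_mul β
  · refine Measurable.ite ?_ ?_ ?_
    · exact measurableSet_lt measurable_id measurable_const
    · exact (measurable_id.const_mul β).sub measurable_const
    · exact (measurable_id.const_mul β).sub measurable_const

lemma digitInt_measurable (β a₁ a₂ b : ℝ) : MeasurableSet (digitInt β a₁ a₂ b) := by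
  unfold digitInt; split_ifs <;> exact measurableSet_Ico

lemma cyl_measurable (β a₁ a₂ : ℝ) (w : List ℝ) : MeasurableSet (cyl β a₁ a₂ w) := by
  unfold cyl
  refine MeasurableSet.biInter (Set.to_countable _) fun k _ => ?_
  exact ((greedyT_measurable β a₁ a₂).iterate k) (digitInt_measurable β a₁ a₂ _)

/-- code map for countability -/
noncomputable def dg (a₁ a₂ : ℝ) (j : Fin 3) : ℝ := if j = 0 then 0 else if j = 1 then a₁ else a₂

lemma dg_injective {β : ℝ} (h : Hyp β a₁ a₂) : Function.Injective (dg a₁ a₂) := by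
  have := h.ha₁; have := h.h12
  intro i j hij
  fin_cases i <;> fin_cases j <;> simp_all [dg] <;> linarith

lemma dg_alphabet (a₁ a₂ : ℝ) (j : Fin 3) :
    dg a₁ a₂ j = 0 ∨ dg a₁ a₂ j = a₁ ∨ dg a₁ a₂ j = a₂ := by
  fin_cases j <;> simp [dg]

lemma isWord_mem_range {w : List ℝ} (hw : isWord a₁ a₂ w) :
    w ∈ Set.range (List.map (dg a₁ a₂)) := by
  induction w with
  | nil => exact ⟨[], rfl⟩
  | cons b w ih =>
    obtain ⟨u, hu⟩ := ih (fun c hc => hw c (List.mem_cons_of_mem _ hc))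
    rcases hw b List.mem_cons_self with rfl | rfl | rfl
    · exact ⟨0 :: u, by simp [dg, hu]⟩
    · exact ⟨1 :: u, by simp [dg, hu]⟩
    · exact ⟨2 :: u, by simp [dg, hu]⟩

lemma isWord_countable (a₁ a₂ : ℝ) : {w : List ℝ | isWord a₁ a₂ w}.Countable :=
  (Set.countable_range (List.map (dg a₁ a₂))).mono fun _ hw => isWord_mem_range hw

lemma Dset_index_countable (β a₁ a₂ : ℝ) (n : ℕ) :
    {w : List ℝ | w.length = n ∧ isWord a₁ a₂ w ∧ isFull β a₁ a₂ w ∧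
      ∀ w' : List ℝ, w' ≠ [] → w' <+: w → w' ≠ w → ¬ isFull β a₁ a₂ w'}.Countable :=
  (isWord_countable a₁ a₂).mono fun _ hw => hw.2.1

lemma memB_countable (β a₁ a₂ : ℝ) (n : ℕ) :
    {w : List ℝ | memB β a₁ a₂ n w}.Countable :=
  (isWord_countable a₁ a₂).mono fun _ hw => hw.2.1

lemma Dset_measurable (β a₁ a₂ : ℝ) (n : ℕ) : MeasurableSet (Dset β a₁ a₂ n) :=
  MeasurableSet.biUnion (Dset_index_countable β a₁ a₂ n)
    fun w _ => cyl_measurable β a₁ a₂ w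

end Meas

section Vol
variable {β a₁ a₂ : ℝ}

lemma volume_Ico_shift (l c : ℝ) :
    volume (Set.Ico l (l + c)) = ENNReal.ofReal c := by
  rw [Real.volume_Ico, add_sub_cancel_left]

/-- nonempty cylinders have positive volume -/
lemma cyl_volume_pos (h : Hyp β a₁ a₂) {w : List ℝ} (hw : isWord a₁ a₂ w)
    (hne : w ≠ []) {x : ℝ} (hx : x ∈ cyl β a₁ a₂ w) : 0 < volume (cyl β a₁ a₂ w) := by
  rcases good h w hw hne with hemp | ⟨l, t, ht0, _, hcyl, _⟩
  · rw [hemp] at hx; exact absurd hx (Set.notMem_empty x)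
  · rw [hcyl, volume_Ico_shift]
    exact ENNReal.ofReal_pos.2 (div_pos ht0 (pow_pos h.hβ0 _))

/-- a full witness: `t = a₁` gives `isFull`. -/
lemma isFull_iff_t (h : Hyp β a₁ a₂) {w : List ℝ} {l t : ℝ} (ht0 : 0 < t)
    (hcyl : cyl β a₁ a₂ w = Set.Ico l (l + t / β ^ w.length)) :
    isFull β a₁ a₂ w ↔ t = a₁ := by
  have hB : (0 : ℝ) < β ^ w.length := pow_pos h.hβ0 _
  rw [isFull, hcyl, volume_Ico_shift]
  rw [ENNReal.ofReal_eq_ofReal_iff (by positivity) (le_of_lt (div_pos h.ha₁ hB))]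
  constructor
  · intro he
    rw [div_eq_div_iff (ne_of_gt hB) (ne_of_gt hB)] at he
    exact mul_right_cancel₀ (ne_of_gt hB) he
  · intro he; rw [he]

end Vol

section Cover
variable {β a₁ a₂ : ℝ}

lemma prefix_wordOf {x : ℝ} {j : ℕ} {w' : List ℝ} (hpre : w' <+: wordOf β a₁ a₂ x j) :
    w' = wordOf β a₁ a₂ x w'.length := by
  have hlen : w'.length ≤ j := by
    have := hpre.length_le; rwa [wordOf_length] at this
  have e := List.prefix_iff_eq_take.1 hpre
  rwa [wordOf_take hlen] at e

lemma cover (h : Hyp β a₁ a₂) {n : ℕ} (hn : 0 < n) :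
    Set.Ico 0 a₁ ⊆ (⋃ k : ℕ, Dset β a₁ a₂ (k + 1)) ∪
      ⋃ w ∈ {w : List ℝ | memB β a₁ a₂ n w}, cyl β a₁ a₂ w := by
  classical
  intro x hx
  by_cases hful : ∃ j, 0 < j ∧ j ≤ n ∧ isFull β a₁ a₂ (wordOf β a₁ a₂ x j)
  · left
    set j := Nat.find hful with hj
    obtain ⟨hj0, hjn, hjf⟩ := Nat.find_spec hful
    have hxj : x ∈ Dset β a₁ a₂ j := by
      rw [Dset, Set.mem_iUnion₂]
      refine ⟨wordOf β a₁ a₂ x j, ⟨wordOf_length x j, wordOf_isWord x j, hjf, ?_⟩,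
        mem_cyl_wordOf h hx j⟩
      intro w' hne hpre hneq
      have hwlen : w'.length ≤ j := by
        have := hpre.length_le; rwa [wordOf_length] at this
      have hwlt : w'.length < j := by
        rcases lt_or_eq_of_le hwlen with hlt | heq
        · exact hlt
        · exact absurd (hpre.eq_of_length (by rw [wordOf_length, heq])) hneq
      have hw' : w' = wordOf β a₁ a₂ x w'.length := prefix_wordOf hpre
      have hnot := Nat.find_min hful hwlt
      rw [hw']
      intro hcon
      exact hnot ⟨List.length_pos_iff.2 hne, by omega, hcon⟩
    rw [Set.mem_iUnion]
    exact ⟨j - 1, by rwa [Nat.sub_add_cancel hj0]⟩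
  · right
    push_neg at hful
    rw [Set.mem_iUnion₂]
    refine ⟨wordOf β a₁ a₂ x n, ⟨wordOf_length x n, wordOf_isWord x n,
      cyl_volume_pos h (wordOf_isWord x n) (wordOf_ne_nil x hn) (mem_cyl_wordOf h hx n), ?_, ?_⟩,
      mem_cyl_wordOf h hx n⟩
    · exact hful n hn (le_refl n)
    · intro w' hne hpre hneq
      have hwlen : w'.length ≤ n := by
        have := hpre.length_le; rwa [wordOf_length] at this
      rw [prefix_wordOf hpre]
      exact hful _ (List.length_pos_iff.2 hne) hwlen

lemma Dset_disjoint_lt (h : Hyp β a₁ a₂) {m n : ℕ} (hm : 1 ≤ m) (hmn : m < n) :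
    Disjoint (Dset β a₁ a₂ m) (Dset β a₁ a₂ n) := by
  rw [Set.disjoint_left]
  intro x hxm hxn
  rw [Dset, Set.mem_iUnion₂] at hxm hxn
  obtain ⟨w, ⟨hwl, hww, hwf, _⟩, hxw⟩ := hxm
  obtain ⟨v, ⟨hvl, hvw, _, hvpre⟩, hxv⟩ := hxn
  set v' := v.take m with hv'
  have hpre : v' <+: v := List.take_prefix _ _
  have hv'l : v'.length = m := by rw [hv', List.length_take, hvl]; omega
  have hxv' : x ∈ cyl β a₁ a₂ v' := cyl_prefix hpre hxv
  have hv'w : isWord a₁ a₂ v' := fun c hc => hvw c (hpre.subset hc)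
  have hwv : w = v' := word_unique h hww hv'w (by rw [hwl, hv'l]) hxw hxv'
  have hne : v' ≠ [] := by
    intro hcon; rw [hcon] at hv'l; simp at hv'l; omega
  have hnev : v' ≠ v := by
    intro hcon; rw [hcon] at hv'l; omega
  exact hvpre v' hne hpre hnev (hwv ▸ hwf)

lemma Dset_disjoint (h : Hyp β a₁ a₂) {m n : ℕ} (hm : 1 ≤ m) (hn : 1 ≤ n)
    (hmn : m ≠ n) : Disjoint (Dset β a₁ a₂ m) (Dset β a₁ a₂ n) := by
  rcases lt_or_gt_of_ne hmn with hlt | hgt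
  · exact Dset_disjoint_lt h hm hlt
  · exact (Dset_disjoint_lt h hn hgt).symm

end Cover

section Potential
variable {β a₁ a₂ : ℝ}

noncomputable def Gfun (β a₁ a₂ : ℝ) (n : ℕ) (w : List ℝ) : ℝ≥0∞ :=
  if memB β a₁ a₂ n w then volume (cyl β a₁ a₂ w) + ENNReal.ofReal (a₁ / 2 / β ^ n)
  else 0

noncomputable def Phi (β a₁ a₂ : ℝ) (n : ℕ) : ℝ≥0∞ := ∑' w : List ℝ, Gfun β a₁ a₂ n w

noncomputable def theta (β a₁ a₂ : ℝ) : ℝ :=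
  max (3 / (2 + β)) (max ((a₂ - a₁ / 2) / (a₂ + β * (a₁ / 2))) (2 / 3))

lemma theta_nonneg (h : Hyp β a₁ a₂) : 0 ≤ theta β a₁ a₂ :=
  le_trans (by norm_num) (le_max_of_le_right (le_max_right _ _))

lemma theta_lt_one (h : Hyp β a₁ a₂) : theta β a₁ a₂ < 1 := by
  have hβ1 := h.hβ1; have ha₁ := h.ha₁; have ha₂ := h.ha₂; have hβ0 := h.hβ0
  rw [theta, max_lt_iff, max_lt_iff]
  refine ⟨?_, ?_, by norm_num⟩
  · rw [div_lt_one (by linarith)]; linarith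
  · rw [div_lt_one (by positivity)]; nlinarith

lemma Gfun_le (β a₁ a₂ : ℝ) (n : ℕ) (w : List ℝ) :
    Gfun β a₁ a₂ n w ≤ volume (cyl β a₁ a₂ w) + ENNReal.ofReal (a₁ / 2 / β ^ n) := by
  unfold Gfun; split_ifs
  · exact le_refl _
  · exact zero_le

lemma Gfun_zero_of_full {n : ℕ} {w : List ℝ} (hful : isFull β a₁ a₂ w) :
    Gfun β a₁ a₂ n w = 0 :=
  if_neg (fun hmem : memB β a₁ a₂ n w => hmem.2.2.2.1 hful)

lemma Gfun_zero_of_vol {n : ℕ} {w : List ℝ} (hv : volume (cyl β a₁ a₂ w) = 0) :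
    Gfun β a₁ a₂ n w = 0 :=
  if_neg (fun hmem : memB β a₁ a₂ n w => by
    have := hmem.2.2.1; rw [hv] at this; exact lt_irrefl 0 this)

lemma memB_parent {n : ℕ} (hn : 1 ≤ n) {w : List ℝ} {b : ℝ}
    (hmem : memB β a₁ a₂ (n + 1) (w ++ [b])) : memB β a₁ a₂ n w := by
  obtain ⟨hlen, hword, hvol, hful, hpre⟩ := hmem
  rw [List.length_append, List.length_singleton] at hlen
  have hwlen : w.length = n := by omega
  have hwne : w ≠ [] := by
    intro hcon; rw [hcon] at hwlen; simp at hwlen; omega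
  have hwneq : w ≠ w ++ [b] := by
    intro hcon
    have := congrArg List.length hcon
    rw [List.length_append, List.length_singleton] at this; omega
  refine ⟨hwlen, fun c hc => hword c (by simp [hc]), ?_, ?_, ?_⟩
  · refine lt_of_lt_of_le hvol (measure_mono ?_)
    rw [cyl_snoc]; exact Set.inter_subset_left
  · exact hpre w hwne ⟨[b], rfl⟩ hwneq
  · intro w' h1 h2 h3
    refine hpre w' h1 (h2.trans ⟨[b], rfl⟩) ?_
    intro hcon
    have hl := h2.length_le
    rw [hcon, List.length_append, List.length_singleton] at hl
    omega


/-- real inequality, region 1 -/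
lemma ineq1 (h : Hyp β a₁ a₂) {t : ℝ} (ht0 : 0 < t) (ht : t ≤ a₁ / β) :
    t + a₁ / (2 * β) ≤ theta β a₁ a₂ * (t + a₁ / 2) := by
  have hβ1 := h.hβ1; have ha₁ := h.ha₁; have hβ0 := h.hβ0
  have h1 : 3 / (2 + β) ≤ theta β a₁ a₂ := le_max_left _ _
  have hX : (0 : ℝ) ≤ t + a₁ / 2 := by positivity
  refine le_trans ?_ (mul_le_mul_of_nonneg_right h1 hX)
  rw [div_mul_eq_mul_div, le_div_iff₀ (by linarith : (0 : ℝ) < 2 + β)]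
  have e1 : a₁ / β * β = a₁ := div_mul_cancel₀ _ (ne_of_gt hβ0)
  have e2 : a₁ / (2 * β) * (2 * β) = a₁ := div_mul_cancel₀ _ (by positivity)
  nlinarith [mul_nonneg (by linarith : (0 : ℝ) ≤ β - 1) (by linarith : (0 : ℝ) ≤ a₁ / β - t)]

/-- real inequality, region 2 -/
lemma ineq2 (h : Hyp β a₁ a₂) {t : ℝ} (ht0 : 0 < t) (ht : t ≤ a₂ / β) :
    t - a₁ / β + a₁ / (2 * β) ≤ theta β a₁ a₂ * (t + a₁ / 2) := by
  have hβ1 := h.hβ1; have ha₁ := h.ha₁; have ha₂ := h.ha₂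
  have hβ0 := h.hβ0; have h12 := h.h12
  have hD : (0 : ℝ) < a₂ + β * (a₁ / 2) := by positivity
  have hr0 : (0 : ℝ) ≤ a₁ / (2 * β) := by positivity
  have h1 : (a₂ - a₁ / 2) / (a₂ + β * (a₁ / 2)) ≤ theta β a₁ a₂ :=
    le_trans (le_max_left _ _) (le_max_right _ _)
  have hX : (0 : ℝ) ≤ t + a₁ / 2 := by positivity
  refine le_trans ?_ (mul_le_mul_of_nonneg_right h1 hX)
  rw [div_mul_eq_mul_div, le_div_iff₀ hD]
  have e1 : a₁ / β * β = a₁ := div_mul_cancel₀ _ (ne_of_gt hβ0)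
  have e2 : a₁ / (2 * β) * (2 * β) = a₁ := div_mul_cancel₀ _ (by positivity)
  have e3 : a₂ / β * β = a₂ := div_mul_cancel₀ _ (ne_of_gt hβ0)
  have hs : β * t ≤ a₂ := by nlinarith
  nlinarith [mul_nonneg (by linarith : (0 : ℝ) ≤ a₁) (by linarith : (0 : ℝ) ≤ a₂ - β * t),
    mul_nonneg hr0 (by linarith : (0 : ℝ) ≤ a₂ - a₁)]

/-- real inequality, region 3 -/
lemma ineq3 (h : Hyp β a₁ a₂) {t : ℝ} (ht0 : 0 < t) (ht : t ≤ a₁) :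
    t ≤ theta β a₁ a₂ * (t + a₁ / 2) := by
  have ha₁ := h.ha₁
  have h1 : 2 / 3 ≤ theta β a₁ a₂ :=
    le_trans (le_max_right _ _) (le_max_right _ _)
  have hX : (0 : ℝ) ≤ t + a₁ / 2 := by positivity
  refine le_trans ?_ (mul_le_mul_of_nonneg_right h1 hX)
  linarith

/-- the key one-step contraction for the weight of the children of a word -/
lemma children_bound (h : Hyp β a₁ a₂) {n : ℕ} (hn : 1 ≤ n) (w : List ℝ) :
    ∑ j : Fin 3, Gfun β a₁ a₂ (n + 1) (w ++ [dg a₁ a₂ j]) ≤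
      ENNReal.ofReal (theta β a₁ a₂) * Gfun β a₁ a₂ n w := by
  by_cases hmem : memB β a₁ a₂ n w
  case neg =>
    have hzero : ∀ j : Fin 3, Gfun β a₁ a₂ (n + 1) (w ++ [dg a₁ a₂ j]) = 0 := fun j =>
      if_neg fun hc => hmem (memB_parent hn hc)
    rw [Finset.sum_eq_zero fun j _ => hzero j]
    exact zero_le
  case pos =>
  have hlen := hmem.1
  have hword := hmem.2.1
  have hvolpos := hmem.2.2.1
  have hnful := hmem.2.2.2.1
  have hwne : w ≠ [] := by
    intro hcon; rw [hcon] at hlen; simp at hlen; omega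
  rcases good h w hword hwne with hemp | ⟨l, t, ht0, hta, hcyl, hmap⟩
  · rw [hemp] at hvolpos; simp at hvolpos
  have hβ0 := h.hβ0; have ha₁ := h.ha₁; have h12 := h.h12
  have hB : (0 : ℝ) < β ^ n := pow_pos hβ0 n
  have hd10 := h.d10; have hd12 := h.d12; have hd2a := h.d2a
  have hta' : t < a₁ :=
    lt_of_le_of_ne hta fun he => hnful ((isFull_iff_t h ht0 hcyl).2 he)
  have hchild : ∀ b, (b = 0 ∨ b = a₁ ∨ b = a₂) →
      volume (cyl β a₁ a₂ (w ++ [b])) =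
        ENNReal.ofReal ((min t (vD β a₁ a₂ b) - uD β a₁ a₂ b) / β ^ n) := by
    intro b hb
    obtain ⟨hset, _⟩ := cyl_snoc_eq h hb hcyl hmap
    rw [hset, Real.volume_Ico, hlen]
    congr 1
    ring
  have hcterm : a₁ / 2 / β ^ (n + 1) = a₁ / (2 * β) / β ^ n := by
    rw [div_div, div_div, pow_succ]
    congr 1
    ring
  have hvol0 : volume (cyl β a₁ a₂ (w ++ [(0 : ℝ)])) =
      ENNReal.ofReal (min t (a₁ / β) / β ^ n) := by
    rw [hchild 0 (by left; rfl), uD_zero, vD_zero, sub_zero]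
  have hvol1 : volume (cyl β a₁ a₂ (w ++ [a₁])) =
      ENNReal.ofReal ((min t (a₂ / β) - a₁ / β) / β ^ n) := by
    rw [hchild a₁ (by right; left; rfl), uD_a1 h, vD_a1 h]
  have hvol2 : volume (cyl β a₁ a₂ (w ++ [a₂])) =
      ENNReal.ofReal ((t - a₂ / β) / β ^ n) := by
    rw [hchild a₂ (by right; right; rfl), uD_a2 h, vD_a2 h,
      min_eq_left (le_of_lt hta')]
  have hsum3 : ∑ j : Fin 3, Gfun β a₁ a₂ (n + 1) (w ++ [dg a₁ a₂ j]) =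
      Gfun β a₁ a₂ (n + 1) (w ++ [(0 : ℝ)]) + Gfun β a₁ a₂ (n + 1) (w ++ [a₁]) +
        Gfun β a₁ a₂ (n + 1) (w ++ [a₂]) := by
    rw [Fin.sum_univ_three]
    congr <;> norm_num [dg]
  have hGw : Gfun β a₁ a₂ n w = ENNReal.ofReal ((t + a₁ / 2) / β ^ n) := by
    rw [Gfun, if_pos hmem, hcyl, volume_Ico_shift, hlen,
      ← ENNReal.ofReal_add (div_nonneg (le_of_lt ht0) (le_of_lt hB))
        (div_nonneg (by linarith) (le_of_lt hB))]
    congr 1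
    ring
  rw [hsum3, hGw, ← ENNReal.ofReal_mul (theta_nonneg h)]
  -- a₁/β ≤ t makes the 0-child full
  have hfull0 : a₁ / β ≤ t → Gfun β a₁ a₂ (n + 1) (w ++ [(0 : ℝ)]) = 0 := by
    intro hle
    refine Gfun_zero_of_full ?_
    rw [isFull, hvol0, min_eq_right hle]
    congr 1
    · rw [List.length_append, List.length_singleton, hlen, pow_succ, div_div, mul_comm]
  by_cases hreg1 : t ≤ a₁ / β
  · -- region 1 : only the 0-child survives
    have hG1 : Gfun β a₁ a₂ (n + 1) (w ++ [a₁]) = 0 := by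
      refine Gfun_zero_of_vol ?_
      rw [hvol1, min_eq_left (hreg1.trans (le_of_lt hd12)), ENNReal.ofReal_eq_zero]
      apply div_nonpos_of_nonpos_of_nonneg (by linarith) (le_of_lt hB)
    have hG2 : Gfun β a₁ a₂ (n + 1) (w ++ [a₂]) = 0 := by
      refine Gfun_zero_of_vol ?_
      rw [hvol2, ENNReal.ofReal_eq_zero]
      apply div_nonpos_of_nonpos_of_nonneg (by linarith) (le_of_lt hB)
    rw [hG1, hG2, add_zero, add_zero]
    calc Gfun β a₁ a₂ (n + 1) (w ++ [(0 : ℝ)])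
        ≤ ENNReal.ofReal (t / β ^ n) + ENNReal.ofReal (a₁ / (2 * β) / β ^ n) := by
          have hle := Gfun_le β a₁ a₂ (n + 1) (w ++ [(0 : ℝ)])
          rwa [hvol0, min_eq_left hreg1, hcterm] at hle
      _ = ENNReal.ofReal ((t + a₁ / (2 * β)) / β ^ n) := by
          rw [← ENNReal.ofReal_add (div_nonneg (le_of_lt ht0) (le_of_lt hB))
            (by positivity)]
          congr 1
          ring
      _ ≤ ENNReal.ofReal (theta β a₁ a₂ * ((t + a₁ / 2) / β ^ n)) := by
          apply ENNReal.ofReal_le_ofReal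
          rw [← mul_div_assoc, div_le_div_iff_of_pos_right hB]
          exact ineq1 h ht0 hreg1
  · by_cases hreg2 : t ≤ a₂ / β
    · -- region 2 : 0-child full, a₂-child empty
      have hG0 := hfull0 (le_of_lt (not_le.1 hreg1))
      have hG2 : Gfun β a₁ a₂ (n + 1) (w ++ [a₂]) = 0 := by
        refine Gfun_zero_of_vol ?_
        rw [hvol2, ENNReal.ofReal_eq_zero]
        apply div_nonpos_of_nonpos_of_nonneg (by linarith) (le_of_lt hB)
      rw [hG0, hG2, zero_add, add_zero]
      calc Gfun β a₁ a₂ (n + 1) (w ++ [a₁])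
          ≤ ENNReal.ofReal ((t - a₁ / β) / β ^ n) +
              ENNReal.ofReal (a₁ / (2 * β) / β ^ n) := by
            have hle := Gfun_le β a₁ a₂ (n + 1) (w ++ [a₁])
            rwa [hvol1, min_eq_left hreg2, hcterm] at hle
        _ = ENNReal.ofReal ((t - a₁ / β + a₁ / (2 * β)) / β ^ n) := by
            rw [← ENNReal.ofReal_add
              (div_nonneg (by linarith [not_le.1 hreg1]) (le_of_lt hB)) (by positivity)]
            congr 1
            ring
        _ ≤ ENNReal.ofReal (theta β a₁ a₂ * ((t + a₁ / 2) / β ^ n)) := by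
            apply ENNReal.ofReal_le_ofReal
            rw [← mul_div_assoc, div_le_div_iff_of_pos_right hB]
            exact ineq2 h ht0 hreg2
    · -- region 3 : 0-child full, both others survive
      have hreg3 := not_le.1 hreg2
      have hG0 := hfull0 (le_of_lt (lt_of_lt_of_le hd12 (le_of_lt hreg3)))
      rw [hG0, zero_add]
      calc Gfun β a₁ a₂ (n + 1) (w ++ [a₁]) + Gfun β a₁ a₂ (n + 1) (w ++ [a₂])
          ≤ (ENNReal.ofReal ((a₂ / β - a₁ / β) / β ^ n) +
              ENNReal.ofReal (a₁ / (2 * β) / β ^ n)) +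
            (ENNReal.ofReal ((t - a₂ / β) / β ^ n) +
              ENNReal.ofReal (a₁ / (2 * β) / β ^ n)) := by
            apply add_le_add
            · have hle := Gfun_le β a₁ a₂ (n + 1) (w ++ [a₁])
              rwa [hvol1, min_eq_right (le_of_lt hreg3), hcterm] at hle
            · have hle := Gfun_le β a₁ a₂ (n + 1) (w ++ [a₂])
              rwa [hvol2, hcterm] at hle
        _ = ENNReal.ofReal (t / β ^ n) := by
            rw [← ENNReal.ofReal_add (div_nonneg (by linarith) (le_of_lt hB)) (by positivity),
              ← ENNReal.ofReal_add (div_nonneg (by linarith) (le_of_lt hB)) (by positivity),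
              ← ENNReal.ofReal_add]
            · congr 1
              ring
            · apply add_nonneg (div_nonneg (by linarith) (le_of_lt hB)) (by positivity)
            · apply add_nonneg (div_nonneg (by linarith) (le_of_lt hB)) (by positivity)
        _ ≤ ENNReal.ofReal (theta β a₁ a₂ * ((t + a₁ / 2) / β ^ n)) := by
            apply ENNReal.ofReal_le_ofReal
            rw [← mul_div_assoc, div_le_div_iff_of_pos_right hB]
            exact ineq3 h ht0 (le_of_lt hta')

end Potential

section PhiLemmas
variable {β a₁ a₂ : ℝ}

lemma Phi_succ_le (h : Hyp β a₁ a₂) {n : ℕ} (hn : 1 ≤ n) :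
    Phi β a₁ a₂ (n + 1) ≤ ENNReal.ofReal (theta β a₁ a₂) * Phi β a₁ a₂ n := by
  have hinj : Function.Injective
      (fun p : List ℝ × Fin 3 => p.1 ++ [dg a₁ a₂ p.2]) := by
    rintro ⟨w, i⟩ ⟨v, j⟩ he
    simp only [Prod.mk.injEq] at he ⊢
    obtain ⟨h1, h2⟩ := List.append_inj' he (by simp)
    refine ⟨h1, dg_injective h ?_⟩
    simpa using h2
  have hsupp : Function.support (Gfun β a₁ a₂ (n + 1)) ⊆
      Set.range (fun p : List ℝ × Fin 3 => p.1 ++ [dg a₁ a₂ p.2]) := by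
    intro w hw
    have hmem : memB β a₁ a₂ (n + 1) w := by
      by_contra hc; exact hw (if_neg hc)
    have hne : w ≠ [] := by
      intro hcon; rw [hcon] at hmem; obtain ⟨hl, _⟩ := hmem; simp at hl
    have hlast := hmem.2.1 (w.getLast hne) (List.getLast_mem hne)
    have hdecomp := List.dropLast_append_getLast hne
    rcases hlast with he | he | he
    · exact ⟨(w.dropLast, 0), by simp only [dg]; norm_num; rw [← he]; exact hdecomp⟩
    · exact ⟨(w.dropLast, 1), by simp only [dg]; norm_num; rw [← he]; exact hdecomp⟩
    · exact ⟨(w.dropLast, 2), by simp only [dg]; norm_num; rw [← he]; exact hdecomp⟩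
  calc Phi β a₁ a₂ (n + 1)
      = ∑' p : List ℝ × Fin 3, Gfun β a₁ a₂ (n + 1) (p.1 ++ [dg a₁ a₂ p.2]) :=
        (hinj.tsum_eq hsupp).symm
    _ = ∑' w : List ℝ, ∑' j : Fin 3, Gfun β a₁ a₂ (n + 1) (w ++ [dg a₁ a₂ j]) :=
        ENNReal.tsum_prod (f := fun w j => Gfun β a₁ a₂ (n + 1) (w ++ [dg a₁ a₂ j]))
    _ = ∑' w : List ℝ, ∑ j : Fin 3, Gfun β a₁ a₂ (n + 1) (w ++ [dg a₁ a₂ j]) := by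
        congr 1; funext w; exact tsum_fintype _
    _ ≤ ∑' w : List ℝ, ENNReal.ofReal (theta β a₁ a₂) * Gfun β a₁ a₂ n w :=
        ENNReal.tsum_le_tsum fun w => children_bound h hn w
    _ = ENNReal.ofReal (theta β a₁ a₂) * Phi β a₁ a₂ n := ENNReal.tsum_mul_left

lemma Phi_one_le (h : Hyp β a₁ a₂) : Phi β a₁ a₂ 1 ≤ ENNReal.ofReal (6 * a₁) := by
  classical
  have ha₁ := h.ha₁
  set s : Finset (List ℝ) := {[(0 : ℝ)], [a₁], [a₂]} with hs
  have hsub : ∀ w : List ℝ, w ∉ s → Gfun β a₁ a₂ 1 w = 0 := by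
    intro w hw
    rw [Gfun, if_neg]
    intro hmem
    obtain ⟨hlen, hword, _, _, _⟩ := hmem
    obtain ⟨b, rfl⟩ := List.length_eq_one_iff.1 hlen
    rcases hword b (by simp) with rfl | rfl | rfl <;> simp [hs] at hw
  have hbound : ∀ w ∈ s, Gfun β a₁ a₂ 1 w ≤ ENNReal.ofReal (2 * a₁) := by
    intro w hw
    refine le_trans (Gfun_le _ _ _ _ _) ?_
    have hsubset : cyl β a₁ a₂ w ⊆ Set.Ico 0 a₁ := by
      simp only [hs, Finset.mem_insert, Finset.mem_singleton] at hw
      rcases hw with rfl | rfl | rfl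
      · rw [cyl_singleton]; exact digitInt_subset h (Or.inl rfl)
      · rw [cyl_singleton]; exact digitInt_subset h (Or.inr (Or.inl rfl))
      · rw [cyl_singleton]; exact digitInt_subset h (Or.inr (Or.inr rfl))
    have h1 : volume (cyl β a₁ a₂ w) ≤ ENNReal.ofReal a₁ := by
      calc volume (cyl β a₁ a₂ w) ≤ volume (Set.Ico (0 : ℝ) a₁) := measure_mono hsubset
        _ = ENNReal.ofReal (a₁ - 0) := Real.volume_Ico
        _ = ENNReal.ofReal a₁ := by rw [sub_zero]
    have h2 : ENNReal.ofReal (a₁ / 2 / β ^ 1) ≤ ENNReal.ofReal a₁ := by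
      apply ENNReal.ofReal_le_ofReal
      rw [pow_one]
      have hd : a₁ / 2 / β ≤ a₁ / 2 := div_le_self (by positivity) (le_of_lt h.hβ1)
      linarith
    calc volume (cyl β a₁ a₂ w) + ENNReal.ofReal (a₁ / 2 / β ^ 1)
        ≤ ENNReal.ofReal a₁ + ENNReal.ofReal a₁ := add_le_add h1 h2
      _ = ENNReal.ofReal (2 * a₁) := by
          rw [← ENNReal.ofReal_add (le_of_lt ha₁) (le_of_lt ha₁)]; congr 1; ring
  rw [Phi, tsum_eq_sum hsub]
  calc ∑ w ∈ s, Gfun β a₁ a₂ 1 w ≤ ∑ _w ∈ s, ENNReal.ofReal (2 * a₁) :=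
        Finset.sum_le_sum hbound
    _ = (s.card : ℝ≥0∞) * ENNReal.ofReal (2 * a₁) := by
        rw [Finset.sum_const, nsmul_eq_mul]
    _ ≤ (3 : ℝ≥0∞) * ENNReal.ofReal (2 * a₁) := by
        apply mul_le_mul_left
        have : s.card ≤ 3 := by
          apply le_trans (Finset.card_insert_le _ _)
          have : ({[a₁], [a₂]} : Finset (List ℝ)).card ≤ 2 := by
            apply le_trans (Finset.card_insert_le _ _); simp
          omega
        exact_mod_cast this
    _ = ENNReal.ofReal (6 * a₁) := by
        rw [show (3 : ℝ≥0∞) = ENNReal.ofReal 3 by norm_num,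
          ← ENNReal.ofReal_mul (by norm_num)]
        congr 1
        ring

lemma Phi_pow_le (h : Hyp β a₁ a₂) (n : ℕ) :
    Phi β a₁ a₂ (n + 1) ≤
      ENNReal.ofReal (theta β a₁ a₂) ^ n * ENNReal.ofReal (6 * a₁) := by
  induction n with
  | zero => simpa using Phi_one_le h
  | succ m ih =>
    calc Phi β a₁ a₂ (m + 2) ≤ ENNReal.ofReal (theta β a₁ a₂) * Phi β a₁ a₂ (m + 1) :=
          Phi_succ_le h (by omega)
      _ ≤ ENNReal.ofReal (theta β a₁ a₂) *
          (ENNReal.ofReal (theta β a₁ a₂) ^ m * ENNReal.ofReal (6 * a₁)) :=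
          mul_le_mul_right ih _
      _ = ENNReal.ofReal (theta β a₁ a₂) ^ (m + 1) * ENNReal.ofReal (6 * a₁) := by
          rw [pow_succ]; ring

lemma Phi_tendsto (h : Hyp β a₁ a₂) :
    Filter.Tendsto (fun n => Phi β a₁ a₂ (n + 1)) Filter.atTop (nhds 0) := by
  have hθ : ENNReal.ofReal (theta β a₁ a₂) < 1 := by
    rw [← ENNReal.ofReal_one]
    exact ENNReal.ofReal_lt_ofReal_iff_of_nonneg (theta_nonneg h) |>.2 (theta_lt_one h)
  have hpow : Filter.Tendsto (fun n => ENNReal.ofReal (theta β a₁ a₂) ^ n *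
      ENNReal.ofReal (6 * a₁)) Filter.atTop (nhds 0) := by
    have := ENNReal.Tendsto.mul_const
      (ENNReal.tendsto_pow_atTop_nhds_zero_of_lt_one hθ)
      (Or.inr (ENNReal.ofReal_ne_top (r := 6 * a₁)))
    simpa using this
  exact tendsto_of_tendsto_of_tendsto_of_le_of_le tendsto_const_nhds hpow
    (fun n => zero_le) (fun n => Phi_pow_le h n)

lemma Emeasure_le_Phi (β a₁ a₂ : ℝ) (n : ℕ) :
    volume (⋃ w ∈ {w : List ℝ | memB β a₁ a₂ n w}, cyl β a₁ a₂ w) ≤ Phi β a₁ a₂ n := by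
  calc volume (⋃ w ∈ {w : List ℝ | memB β a₁ a₂ n w}, cyl β a₁ a₂ w)
      ≤ ∑' w : {w : List ℝ | memB β a₁ a₂ n w}, volume (cyl β a₁ a₂ w) :=
        measure_biUnion_le _ (memB_countable β a₁ a₂ n) _
    _ ≤ ∑' w : {w : List ℝ | memB β a₁ a₂ n w}, Gfun β a₁ a₂ n w := by
        apply ENNReal.tsum_le_tsum
        rintro ⟨w, hw⟩
        show volume (cyl β a₁ a₂ w) ≤ Gfun β a₁ a₂ n w
        have he : Gfun β a₁ a₂ n w =
            volume (cyl β a₁ a₂ w) + ENNReal.ofReal (a₁ / 2 / β ^ n) := if_pos hw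
        rw [he]
        exact le_self_add
    _ = ∑' w : List ℝ, Set.indicator {w : List ℝ | memB β a₁ a₂ n w}
        (Gfun β a₁ a₂ n) w := (tsum_subtype _ _)
    _ ≤ Phi β a₁ a₂ n :=
        ENNReal.tsum_le_tsum fun w => Set.indicator_le_self _ _ w

end PhiLemmas

section Main
variable {β a₁ a₂ : ℝ}

lemma hyp_of (hβ1 : 1 < β) (ha₁ : 0 < a₁) (h12 : a₁ < a₂)
    (hc : condition6 β a₁ a₂) : Hyp β a₁ a₂ := by
  obtain ⟨hlo, hhi⟩ := hc
  refine ⟨hβ1, ha₁, h12, ?_, ?_, ?_⟩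
  · have : a₁ * min 2 β ≤ a₁ * 2 :=
      mul_le_mul_of_nonneg_left (min_le_left _ _) (le_of_lt ha₁)
    linarith
  · have : a₁ * min 2 β ≤ a₁ * β :=
      mul_le_mul_of_nonneg_left (min_le_right _ _) (le_of_lt ha₁)
    linarith
  · have h1 : a₁ * (β - 1) ≤ a₁ * max (β - 1) 1 :=
      mul_le_mul_of_nonneg_left (le_max_left _ _) (le_of_lt ha₁)
    have h2 : a₁ * (β - 1) = a₁ * β - a₁ := by ring
    linarith

lemma Dset_subset (h : Hyp β a₁ a₂) (n : ℕ) (hn : 1 ≤ n) :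
    Dset β a₁ a₂ n ⊆ Set.Ico 0 a₁ := by
  refine Set.iUnion₂_subset fun w hw => ?_
  have hne : w ≠ [] := by
    intro hcon
    have := hw.1
    rw [hcon] at this
    simp at this
    omega
  exact cyl_subset_Ico h hne hw.2.1

theorem stmt10' (β a₁ a₂ : ℝ) (hβ1 : 1 < β) (hβ3 : β < 3)
    (ha₁ : 0 < a₁) (h12 : a₁ < a₂) (hc : condition6 β a₁ a₂) :
    (∀ m n : ℕ, 1 ≤ m → 1 ≤ n → m ≠ n →
      Disjoint (Dset β a₁ a₂ m) (Dset β a₁ a₂ n)) ∧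
    (∑' n : ℕ, volume (Dset β a₁ a₂ (n + 1))) = ENNReal.ofReal a₁ ∧
    volume (⋃ n : ℕ, Dset β a₁ a₂ (n + 1)) = ENNReal.ofReal a₁ ∧
    volume (Set.Ico (0 : ℝ) a₁) = ENNReal.ofReal a₁ := by
  have h : Hyp β a₁ a₂ := hyp_of hβ1 ha₁ h12 hc
  have hvol_Ico : volume (Set.Ico (0 : ℝ) a₁) = ENNReal.ofReal a₁ := by
    rw [Real.volume_Ico, sub_zero]
  have hdisj : ∀ m n : ℕ, 1 ≤ m → 1 ≤ n → m ≠ n →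
      Disjoint (Dset β a₁ a₂ m) (Dset β a₁ a₂ n) :=
    fun m n hm hn hmn => Dset_disjoint h hm hn hmn
  have hUsub : (⋃ n : ℕ, Dset β a₁ a₂ (n + 1)) ⊆ Set.Ico 0 a₁ :=
    Set.iUnion_subset fun k => Dset_subset h (k + 1) (by omega)
  have hUle : volume (⋃ n : ℕ, Dset β a₁ a₂ (n + 1)) ≤ ENNReal.ofReal a₁ := by
    rw [← hvol_Ico]; exact measure_mono hUsub
  have hUge : ENNReal.ofReal a₁ ≤ volume (⋃ n : ℕ, Dset β a₁ a₂ (n + 1)) := by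
    have hbound : ∀ n : ℕ, ENNReal.ofReal a₁ ≤
        volume (⋃ n : ℕ, Dset β a₁ a₂ (n + 1)) + Phi β a₁ a₂ (n + 1) := by
      intro n
      calc ENNReal.ofReal a₁ = volume (Set.Ico (0 : ℝ) a₁) := hvol_Ico.symm
        _ ≤ volume ((⋃ k : ℕ, Dset β a₁ a₂ (k + 1)) ∪
            ⋃ w ∈ {w : List ℝ | memB β a₁ a₂ (n + 1) w}, cyl β a₁ a₂ w) :=
          measure_mono (cover h (by omega))
        _ ≤ volume (⋃ k : ℕ, Dset β a₁ a₂ (k + 1)) +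
            volume (⋃ w ∈ {w : List ℝ | memB β a₁ a₂ (n + 1) w}, cyl β a₁ a₂ w) :=
          measure_union_le _ _
        _ ≤ volume (⋃ k : ℕ, Dset β a₁ a₂ (k + 1)) + Phi β a₁ a₂ (n + 1) :=
          add_le_add_right (Emeasure_le_Phi β a₁ a₂ (n + 1)) _
    have hlim : Filter.Tendsto
        (fun n => volume (⋃ k : ℕ, Dset β a₁ a₂ (k + 1)) + Phi β a₁ a₂ (n + 1))
        Filter.atTop (nhds (volume (⋃ k : ℕ, Dset β a₁ a₂ (k + 1)))) := by
      have := Filter.Tendsto.const_add (volume (⋃ k : ℕ, Dset β a₁ a₂ (k + 1)))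
        (Phi_tendsto h)
      simpa using this
    exact ge_of_tendsto' hlim hbound
  have hUvol : volume (⋃ n : ℕ, Dset β a₁ a₂ (n + 1)) = ENNReal.ofReal a₁ :=
    le_antisymm hUle hUge
  have hsum : (∑' n : ℕ, volume (Dset β a₁ a₂ (n + 1))) =
      volume (⋃ n : ℕ, Dset β a₁ a₂ (n + 1)) :=
    (measure_iUnion
      (fun i j hij => hdisj (i + 1) (j + 1) (by omega) (by omega) (by omega))
      (fun i => Dset_measurable β a₁ a₂ (i + 1))).symm
  exact ⟨hdisj, hsum.trans hUvol, hUvol, hvol_Ico⟩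

end Main


/-- The sets `Dₙ`, `n ≥ 1`, are pairwise disjoint and
`λ(⋃_{n≥1} Dₙ) = Σ_{n≥1} λ(Dₙ) = λ([0, a₁)) = a₁`; in particular,
Lebesgue-almost every point of `[0, a₁)` lies in some full fundamental
interval. -/
theorem stmt10 (β a₁ a₂ : ℝ) (hβ1 : 1 < β) (hβ3 : β < 3)
    (ha₁ : 0 < a₁) (h12 : a₁ < a₂) (hc : condition6 β a₁ a₂) :
    (∀ m n : ℕ, 1 ≤ m → 1 ≤ n → m ≠ n →
      Disjoint (Dset β a₁ a₂ m) (Dset β a₁ a₂ n)) ∧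
    (∑' n : ℕ, volume (Dset β a₁ a₂ (n + 1))) = ENNReal.ofReal a₁ ∧
    volume (⋃ n : ℕ, Dset β a₁ a₂ (n + 1)) = ENNReal.ofReal a₁ ∧
    volume (Set.Ico (0 : ℝ) a₁) = ENNReal.ofReal a₁ := stmt10' β a₁ a₂ hβ1 hβ3 ha₁ h12 hc
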